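/- Let 1 < α < θ and let Φ be a strictly convex differentiable nice Young function such that Φ(x)/x^α is non-decreasing and Φ(x)/x^θ is non-increasing on (0,∞). If there is Γ ≥ 0 with Γ·Φ(xy) ≥ Φ(x)·Φ(y) for all x,y ≥ 0, then there exists Γ₁ ≥ 0 such that Γ₁·Φ'(xy) ≥ Φ'(x)·Φ'(y) for all x,y ≥ 0 (one may take Γ₁ = θ²Γ/α). -/

import Mathlib

open Real Set

lemma deriv_nonneg_of_monotoneOn' {g : ℝ → ℝ} {x : ℝ} (hx : 0 < x)
    (hg : MonotoneOn g (Set.Ioi 0)) (hd : DifferentiableAt ℝ g x) : 0 ≤ deriv g x := by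
  have h := (hd.hasDerivAt.hasDerivWithinAt (s := Set.Ioi x))
  rw [hasDerivWithinAt_iff_tendsto_slope] at h
  rw [show Set.Ioi x \ {x} = Set.Ioi x from Set.diff_singleton_eq_self (by simp)] at h
  refine ge_of_tendsto h ?_
  filter_upwards [self_mem_nhdsWithin] with y hy
  have hxy : x < y := hy
  have hle : g x ≤ g y := hg hx (hx.trans hxy) hxy.le
  rw [slope_def_field]
  have : 0 < y - x := by linarith
  exact div_nonneg (by linarith) this.le

lemma ratio_mono_ineq {Φ : ℝ → ℝ} {p x : ℝ} (hx : 0 < x)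
    (hdiff : Differentiable ℝ Φ)
    (hmono : MonotoneOn (fun x => Φ x / x ^ p) (Set.Ioi 0)) :
    p * Φ x ≤ x * deriv Φ x := by
  have hxne : x ≠ 0 := hx.ne'
  have hrpow : HasDerivAt (fun y : ℝ => y ^ p) (p * x ^ (p - 1)) x :=
    Real.hasDerivAt_rpow_const (Or.inl hxne)
  have hxp : (0:ℝ) < x ^ p := Real.rpow_pos_of_pos hx p
  have hd : HasDerivAt (fun y => Φ y / y ^ p)
      ((deriv Φ x * x ^ p - Φ x * (p * x ^ (p - 1))) / (x ^ p) ^ 2) x :=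
    (hdiff x).hasDerivAt.div hrpow hxp.ne'
  have h0 : 0 ≤ (deriv Φ x * x ^ p - Φ x * (p * x ^ (p - 1))) / (x ^ p) ^ 2 := by
    rw [← hd.deriv]
    exact deriv_nonneg_of_monotoneOn' hx hmono hd.differentiableAt
  have h2 : (0:ℝ) < (x ^ p) ^ 2 := by positivity
  have hnum : 0 ≤ deriv Φ x * x ^ p - Φ x * (p * x ^ (p - 1)) := by
    have := mul_nonneg h0 h2.le
    rwa [div_mul_cancel₀ _ h2.ne'] at this
  have hxp1 : x ^ p = x * x ^ (p - 1) := by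
    have := Real.rpow_add hx 1 (p - 1)
    rw [show (1:ℝ) + (p - 1) = p by ring, Real.rpow_one] at this
    exact this
  have hq : (0:ℝ) < x ^ (p - 1) := Real.rpow_pos_of_pos hx _
  have h3 : (p * Φ x) * x ^ (p - 1) ≤ (x * deriv Φ x) * x ^ (p - 1) := by
    rw [hxp1] at hnum; nlinarith [hnum]
  exact le_of_mul_le_mul_right h3 hq

lemma ratio_anti_ineq {Φ : ℝ → ℝ} {p x : ℝ} (hx : 0 < x)
    (hdiff : Differentiable ℝ Φ)
    (hanti : AntitoneOn (fun x => Φ x / x ^ p) (Set.Ioi 0)) :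
    x * deriv Φ x ≤ p * Φ x := by
  have hmono : MonotoneOn (fun x => (fun y => -Φ y) x / x ^ p) (Set.Ioi 0) := by
    intro a ha b hb hab
    simp only [neg_div]
    exact neg_le_neg (hanti ha hb hab)
  have := ratio_mono_ineq hx hdiff.neg hmono
  rw [deriv.neg] at this
  rw [Pi.neg_apply] at this
  linarith

/-- For a strictly convex differentiable nice Young function `Φ` with
`Φ(x)/x^α` non-decreasing and `Φ(x)/x^θ` non-increasing (`1 < α < θ`), if
`Γ·Φ(xy) ≥ Φ(x)Φ(y)` for all `x,y ≥ 0`, then `Γ₁·Φ'(xy) ≥ Φ'(x)Φ'(y)` with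
`Γ₁ = θ²Γ/α`. -/
theorem stmt4 (Φ : ℝ → ℝ) (α θ Γ : ℝ) (hα : 1 < α) (hαθ : α < θ) (hΓ : 0 ≤ Γ)
    (heven : ∀ x, Φ (-x) = Φ x)
    (hconv : StrictConvexOn ℝ Set.univ Φ)
    (hdiff : Differentiable ℝ Φ)
    (hnonneg : ∀ x, 0 ≤ Φ x)
    (h0 : Φ 0 = 0)
    (hd0 : deriv Φ 0 = 0)
    (hvanish : ∀ x, Φ x = 0 → x = 0)
    (hsuper : Filter.Tendsto (fun x => Φ x / x) Filter.atTop Filter.atTop)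
    (hmono : MonotoneOn (fun x => Φ x / x ^ α) (Set.Ioi 0))
    (hanti : AntitoneOn (fun x => Φ x / x ^ θ) (Set.Ioi 0))
    (hsub : ∀ x ≥ (0:ℝ), ∀ y ≥ (0:ℝ), Φ x * Φ y ≤ Γ * Φ (x * y)) :
    ∃ Γ₁ : ℝ, 0 ≤ Γ₁ ∧ Γ₁ = θ ^ 2 * Γ / α ∧
      ∀ x ≥ (0:ℝ), ∀ y ≥ (0:ℝ), deriv Φ x * deriv Φ y ≤ Γ₁ * deriv Φ (x * y) := by
  have hαpos : (0:ℝ) < α := by linarith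
  have hθpos : (0:ℝ) < θ := by linarith
  refine ⟨θ ^ 2 * Γ / α, by positivity, rfl, ?_⟩
  intro x hx y hy
  rcases eq_or_lt_of_le hx with rfl | hx'
  · simp [hd0, zero_mul]
  rcases eq_or_lt_of_le hy with rfl | hy'
  · simp [hd0, mul_zero]
  have hxy : 0 < x * y := mul_pos hx' hy'
  have hux : x * deriv Φ x ≤ θ * Φ x := ratio_anti_ineq hx' hdiff hanti
  have huy : y * deriv Φ y ≤ θ * Φ y := ratio_anti_ineq hy' hdiff hanti
  have hl : α * Φ (x * y) ≤ (x * y) * deriv Φ (x * y) := ratio_mono_ineq hxy hdiff hmono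
  have hdx : 0 ≤ deriv Φ x := by
    have := ratio_mono_ineq hx' hdiff hmono
    nlinarith [hnonneg x]
  have hdy : 0 ≤ deriv Φ y := by
    have := ratio_mono_ineq hy' hdiff hmono
    nlinarith [hnonneg y]
  have hs := hsub x hx y hy
  have h1 : (x * deriv Φ x) * (y * deriv Φ y) ≤ (θ * Φ x) * (θ * Φ y) :=
    mul_le_mul hux huy (mul_nonneg hy'.le hdy) (mul_nonneg hθpos.le (hnonneg x))
  have h2 : (θ * Φ x) * (θ * Φ y) ≤ θ ^ 2 * (Γ * Φ (x * y)) := by nlinarith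
  have h3 : θ ^ 2 * (Γ * Φ (x * y)) ≤ θ ^ 2 * Γ / α * ((x * y) * deriv Φ (x * y)) := by
    have hΓθ : 0 ≤ θ ^ 2 * Γ / α := by positivity
    calc θ ^ 2 * (Γ * Φ (x * y)) = θ ^ 2 * Γ / α * (α * Φ (x * y)) := by
          field_simp
      _ ≤ θ ^ 2 * Γ / α * ((x * y) * deriv Φ (x * y)) := by
          exact mul_le_mul_of_nonneg_left hl hΓθ
  have h4 : (x * y) * (deriv Φ x * deriv Φ y) ≤ (x * y) * (θ ^ 2 * Γ / α * deriv Φ (x * y)) := by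
    nlinarith [h1, h2, h3]
  exact le_of_mul_le_mul_left h4 hxy
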